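/- Let Z be a random variable with values in [0,1] and let (ζ, γ) be a random pair independent of Z with ζ ∈ [0,1) almost surely and γ ≥ γ₀ almost surely for some constant γ₀ > 1, such that Φ_{(ζ,γ)}(Z) has the same distribution as Z. Then E[Z] > 0 if and only if P(ζ > 0) > 0. In particular, if ζ = 0 almost surely then Z = 0 almost surely. -/
import Mathlib


open MeasureTheory ProbabilityTheory

/-- The Möbius transform `Φ_{(ζ,γ)}(z) = (ζγ² + z)/(γ² + ζz)`. -/
noncomputable def Phi (ζ γ z : ℝ) : ℝ := (ζ * γ ^ 2 + z) / (γ ^ 2 + ζ * z)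

/-- Let `Z` be `[0,1]`-valued, let `(ζ, γ)` be independent of `Z` with `ζ ∈ [0,1)` a.s.
and `γ ≥ γ₀ > 1` a.s., and suppose `Φ_{(ζ,γ)}(Z)` has the same law as `Z`.  Then
`E[Z] > 0` if and only if `P(ζ > 0) > 0`; in particular if `ζ = 0` a.s. then `Z = 0` a.s. -/
theorem stmt5 {Ω : Type*} [MeasurableSpace Ω] (μ : Measure Ω) [IsProbabilityMeasure μ]
    (Z ζ γ : Ω → ℝ) (γ₀ : ℝ) (hγ₀ : 1 < γ₀)
    (hZmeas : Measurable Z) (hpairmeas : Measurable (fun ω => (ζ ω, γ ω)))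
    (hZrange : ∀ᵐ ω ∂μ, Z ω ∈ Set.Icc (0 : ℝ) 1)
    (hζrange : ∀ᵐ ω ∂μ, 0 ≤ ζ ω ∧ ζ ω < 1)
    (hγrange : ∀ᵐ ω ∂μ, γ₀ ≤ γ ω)
    (hindep : IndepFun (fun ω => (ζ ω, γ ω)) Z μ)
    (hfix : Measure.map (fun ω => Phi (ζ ω) (γ ω) (Z ω)) μ = Measure.map Z μ) :
    ((0 < ∫ ω, Z ω ∂μ) ↔ 0 < μ {ω | 0 < ζ ω}) ∧
    ((∀ᵐ ω ∂μ, ζ ω = 0) → (∀ᵐ ω ∂μ, Z ω = 0)) := by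
  have hζmeas : Measurable ζ := measurable_fst.comp hpairmeas
  have hγmeas : Measurable γ := measurable_snd.comp hpairmeas
  have hPhimeas : Measurable (fun ω => Phi (ζ ω) (γ ω) (Z ω)) := by
    unfold Phi
    exact ((hζmeas.mul (hγmeas.pow_const 2)).add hZmeas).div
      ((hγmeas.pow_const 2).add (hζmeas.mul hZmeas))
  have hZint : Integrable Z μ := by
    refine (integrable_const (1 : ℝ)).mono' hZmeas.aestronglyMeasurable ?_
    filter_upwards [hZrange] with ω hω
    rw [Real.norm_eq_abs, abs_le]; constructor <;> linarith [hω.1, hω.2]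
  -- key: E[Φ] = E[Z]
  have key : ∫ ω, Phi (ζ ω) (γ ω) (Z ω) ∂μ = ∫ ω, Z ω ∂μ := by
    have h1 : ∫ ω, Phi (ζ ω) (γ ω) (Z ω) ∂μ
        = ∫ x, x ∂(Measure.map (fun ω => Phi (ζ ω) (γ ω) (Z ω)) μ) :=
      (integral_map hPhimeas.aemeasurable aestronglyMeasurable_id).symm
    have h2 : ∫ x, x ∂(Measure.map Z μ) = ∫ ω, Z ω ∂μ :=
      integral_map hZmeas.aemeasurable aestronglyMeasurable_id
    rw [h1, hfix, h2]
  have hEZnn : 0 ≤ ∫ ω, Z ω ∂μ := by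
    apply integral_nonneg_of_ae
    filter_upwards [hZrange] with ω hω using hω.1
  -- Lemma A : ζ = 0 a.e. → E[Z] = 0
  have lemA : (∀ᵐ ω ∂μ, ζ ω = 0) → ∫ ω, Z ω ∂μ = 0 := by
    intro hζ0
    have hbound : ∀ᵐ ω ∂μ, Phi (ζ ω) (γ ω) (Z ω) ≤ Z ω / γ₀ ^ 2 := by
      filter_upwards [hζ0, hγrange, hZrange] with ω h0 hγω hZω
      have hγ2 : γ₀ ^ 2 ≤ γ ω ^ 2 := by nlinarith
      have : Phi (ζ ω) (γ ω) (Z ω) = Z ω / γ ω ^ 2 := by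
        simp [Phi, h0]
      rw [this]
      exact div_le_div_of_nonneg_left hZω.1 (by nlinarith) hγ2
    have hInt2 : Integrable (fun ω => Z ω / γ₀ ^ 2) μ := hZint.div_const _
    have hPhiInt : Integrable (fun ω => Phi (ζ ω) (γ ω) (Z ω)) μ := by
      refine (integrable_const (1 : ℝ)).mono' hPhimeas.aestronglyMeasurable ?_
      filter_upwards [hζrange, hγrange, hZrange] with ω hζω hγω hZω
      have hγ2 : (1:ℝ) < γ ω ^ 2 := by nlinarith
      have hden : (0:ℝ) < γ ω ^ 2 + ζ ω * Z ω := by nlinarith [mul_nonneg hζω.1 hZω.1]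
      have hnum : (0:ℝ) ≤ ζ ω * γ ω ^ 2 + Z ω := by nlinarith [mul_nonneg hζω.1 (sq_nonneg (γ ω)), hZω.1]
      rw [Real.norm_eq_abs, abs_le]
      constructor
      · have : (0:ℝ) ≤ Phi (ζ ω) (γ ω) (Z ω) := div_nonneg hnum hden.le
        linarith
      · rw [Phi, div_le_one hden]
        nlinarith [hZω.2, hζω.2, mul_nonneg hζω.1 hZω.1]
    have hle : ∫ ω, Phi (ζ ω) (γ ω) (Z ω) ∂μ ≤ ∫ ω, Z ω / γ₀ ^ 2 ∂μ :=
      integral_mono_ae hPhiInt hInt2 hbound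
    rw [key] at hle
    rw [integral_div] at hle
    have hγ₀2 : (1:ℝ) < γ₀ ^ 2 := by nlinarith
    have h2 : (∫ ω, Z ω ∂μ) * γ₀ ^ 2 ≤ ∫ ω, Z ω ∂μ :=
      (le_div_iff₀ (by positivity)).mp hle
    have hle0 : ∫ ω, Z ω ∂μ ≤ 0 := by nlinarith
    linarith
  -- Lemma B : Z = 0 a.e. → μ {ζ > 0} = 0
  have lemB : (∀ᵐ ω ∂μ, Z ω = 0) → μ {ω | 0 < ζ ω} = 0 := by
    intro hZ0
    have hcongr : (fun ω => Phi (ζ ω) (γ ω) (Z ω)) =ᵐ[μ] ζ := by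
      filter_upwards [hZ0, hγrange] with ω h0 hγω
      have hγ2 : γ ω ^ 2 ≠ 0 := by nlinarith
      simp [Phi, h0, hγ2]
    have hmap : Measure.map ζ μ = Measure.map Z μ := by
      rw [← Measure.map_congr hcongr, hfix]
    have h1 : μ {ω | 0 < ζ ω} = Measure.map ζ μ (Set.Ioi 0) := by
      rw [Measure.map_apply hζmeas measurableSet_Ioi]; rfl
    have h2 : Measure.map Z μ (Set.Ioi 0) = μ {ω | 0 < Z ω} := by
      rw [Measure.map_apply hZmeas measurableSet_Ioi]; rfl
    rw [h1, hmap, h2]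
    have : {ω | 0 < Z ω} ⊆ {ω | ¬ Z ω = 0} := fun ω h => by simp; exact ne_of_gt h
    exact measure_mono_null this hZ0
  have hEZ0_of_ζ0 : μ {ω | 0 < ζ ω} = 0 → (∀ᵐ ω ∂μ, ζ ω = 0) := by
    intro h
    have hle : ∀ᵐ ω ∂μ, ζ ω ≤ 0 := by
      rw [ae_iff]
      convert h using 2
      ext ω; simp [not_le]
    filter_upwards [hle, hζrange] with ω h1 h2
    linarith [h2.1]
  have hZ0_of_EZ0 : ∫ ω, Z ω ∂μ = 0 → (∀ᵐ ω ∂μ, Z ω = 0) := by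
    intro h
    have hZnn : 0 ≤ᵐ[μ] Z := by filter_upwards [hZrange] with ω hω using hω.1
    have := (integral_eq_zero_iff_of_nonneg_ae hZnn hZint).mp h
    filter_upwards [this] with ω hω using hω
  constructor
  · constructor
    · intro h
      by_contra h'
      have h0 : μ {ω | 0 < ζ ω} = 0 := by
        by_contra h''
        exact h' (pos_iff_ne_zero.mpr h'')
      have := lemA (hEZ0_of_ζ0 h0)
      linarith
    · intro h
      by_contra h'
      have hEZ0 : ∫ ω, Z ω ∂μ = 0 := le_antisymm (not_lt.mp h') hEZnn
      have := lemB (hZ0_of_EZ0 hEZ0)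
      rw [this] at h
      exact lt_irrefl 0 h
  · intro hζ0
    exact hZ0_of_EZ0 (lemA hζ0)
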